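/- Let A be an n×n Hermitian matrix, x ∈ ℂⁿ, and c a nonzero real number. If c > 0 then π(A + c·x·x*) ≤ π(A) + 1 and ν(A + c·x·x*) ≤ ν(A); if c < 0 then ν(A + c·x·x*) ≤ ν(A) + 1 and π(A + c·x·x*) ≤ π(A). -/

import Mathlib

open Matrix

/-- Number of positive eigenvalues (with multiplicity) of a Hermitian matrix. -/
noncomputable def posIn {m : ℕ} {A : Matrix (Fin m) (Fin m) ℂ} (hA : A.IsHermitian) : ℕ :=
  Finset.card (Finset.univ.filter fun i => 0 < hA.eigenvalues i)

/-- Number of negative eigenvalues (with multiplicity) of a Hermitian matrix. -/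
noncomputable def negIn {m : ℕ} {A : Matrix (Fin m) (Fin m) ℂ} (hA : A.IsHermitian) : ℕ :=
  Finset.card (Finset.univ.filter fun i => hA.eigenvalues i < 0)

noncomputable def quadF {m : ℕ} (B : Matrix (Fin m) (Fin m) ℂ)
    (v : EuclideanSpace ℂ (Fin m)) : ℝ :=
  Complex.re (star (⇑v : Fin m → ℂ) ⬝ᵥ (B *ᵥ ⇑v))

lemma quadF_eq_inner {m : ℕ} (B : Matrix (Fin m) (Fin m) ℂ) (v : EuclideanSpace ℂ (Fin m)) :
    quadF B v = Complex.re (inner ℂ v ((Matrix.toEuclideanLin B) v) : ℂ) := by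
  rw [quadF, EuclideanSpace.inner_eq_star_dotProduct, dotProduct_comm]
  rfl

lemma toEuclideanLin_eigenvectorBasis {m : ℕ} {B : Matrix (Fin m) (Fin m) ℂ}
    (hB : B.IsHermitian) (j : Fin m) :
    Matrix.toEuclideanLin B (hB.eigenvectorBasis j) =
      (hB.eigenvalues j : ℂ) • hB.eigenvectorBasis j := by
  apply PiLp.ext
  intro i
  have := congrFun (hB.mulVec_eigenvectorBasis j) i
  simpa [Matrix.toEuclideanLin_apply, Complex.real_smul] using this

lemma quadF_eq_sum {m : ℕ} {B : Matrix (Fin m) (Fin m) ℂ} (hB : B.IsHermitian)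
    (v : EuclideanSpace ℂ (Fin m)) :
    quadF B v = ∑ i, hB.eigenvalues i * ‖hB.eigenvectorBasis.repr v i‖ ^ 2 := by
  rw [quadF_eq_inner]
  have hT : Matrix.toEuclideanLin B v =
      ∑ i, hB.eigenvectorBasis.repr v i •
        ((hB.eigenvalues i : ℂ) • hB.eigenvectorBasis i) := by
    conv_lhs => rw [← hB.eigenvectorBasis.sum_repr v]
    rw [map_sum]
    simp_rw [_root_.map_smul, toEuclideanLin_eigenvectorBasis]
  rw [hT, inner_sum]
  rw [Complex.re_sum]
  apply Finset.sum_congr rfl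
  intro i _
  rw [inner_smul_right, inner_smul_right]
  have hv : (inner ℂ v (hB.eigenvectorBasis i) : ℂ) =
      (starRingEnd ℂ) (hB.eigenvectorBasis.repr v i) := by
    rw [← inner_conj_symm, hB.eigenvectorBasis.repr_apply_apply]
  rw [hv]
  have : hB.eigenvectorBasis.repr v i * ((hB.eigenvalues i : ℂ) *
      (starRingEnd ℂ) (hB.eigenvectorBasis.repr v i)) =
      ((hB.eigenvalues i * ‖hB.eigenvectorBasis.repr v i‖ ^ 2 : ℝ) : ℂ) := by
    rw [show hB.eigenvectorBasis.repr v i * ((hB.eigenvalues i : ℂ) *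
        (starRingEnd ℂ) (hB.eigenvectorBasis.repr v i)) =
        (hB.eigenvalues i : ℂ) * (hB.eigenvectorBasis.repr v i *
        (starRingEnd ℂ) (hB.eigenvectorBasis.repr v i)) from by ring,
      Complex.mul_conj, Complex.normSq_eq_norm_sq]
    push_cast
    ring
  rw [this, Complex.ofReal_re]

noncomputable def eigSpan {m : ℕ} {B : Matrix (Fin m) (Fin m) ℂ} (hB : B.IsHermitian)
    (s : Finset (Fin m)) : Submodule ℂ (EuclideanSpace ℂ (Fin m)) :=
  Submodule.span ℂ (hB.eigenvectorBasis '' ↑s)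

lemma finrank_eigSpan {m : ℕ} {B : Matrix (Fin m) (Fin m) ℂ} (hB : B.IsHermitian)
    (s : Finset (Fin m)) : Module.finrank ℂ (eigSpan hB s) = s.card := by
  have hli : LinearIndependent ℂ (fun i : s => hB.eigenvectorBasis i) :=
    (hB.eigenvectorBasis.orthonormal.linearIndependent).comp _ Subtype.val_injective
  have himg : Set.range (fun i : s => hB.eigenvectorBasis i) = hB.eigenvectorBasis '' ↑s := by
    ext y; simp
  rw [eigSpan, ← himg, finrank_span_eq_card hli, Fintype.card_coe]

lemma repr_eq_zero_of_mem_eigSpan {m : ℕ} {B : Matrix (Fin m) (Fin m) ℂ}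
    (hB : B.IsHermitian) (s : Finset (Fin m)) {v : EuclideanSpace ℂ (Fin m)}
    (hv : v ∈ eigSpan hB s) {i : Fin m} (hi : i ∉ s) :
    hB.eigenvectorBasis.repr v i = 0 := by
  induction hv using Submodule.span_induction with
  | mem w hw =>
    obtain ⟨j, hj, rfl⟩ := hw
    rw [hB.eigenvectorBasis.repr_self]
    have h2 : i ≠ j := by rintro rfl; exact hi hj
    simp [EuclideanSpace.single_apply, h2]
  | zero => simp
  | add w₁ w₂ _ _ h1 h2 => simp [h1, h2]
  | smul a w _ h => simp [h]

lemma quadF_pos_of_mem_posSpan {m : ℕ} {B : Matrix (Fin m) (Fin m) ℂ}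
    (hB : B.IsHermitian) {v : EuclideanSpace ℂ (Fin m)}
    (hv : v ∈ eigSpan hB (Finset.univ.filter fun i => 0 < hB.eigenvalues i))
    (hv0 : v ≠ 0) : 0 < quadF B v := by
  rw [quadF_eq_sum hB]
  obtain ⟨i₀, hi₀⟩ : ∃ i, hB.eigenvectorBasis.repr v i ≠ 0 := by
    by_contra h
    push_neg at h
    apply hv0
    apply hB.eigenvectorBasis.repr.injective
    apply PiLp.ext; intro i; simpa using h i
  have hi₀mem : 0 < hB.eigenvalues i₀ := by
    by_contra h
    exact hi₀ (repr_eq_zero_of_mem_eigSpan hB _ hv (by simp [h]))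
  refine Finset.sum_pos' ?_ ⟨i₀, Finset.mem_univ _, ?_⟩
  · intro i _
    rcases le_or_gt (hB.eigenvalues i) 0 with h | h
    · have : hB.eigenvectorBasis.repr v i = 0 :=
        repr_eq_zero_of_mem_eigSpan hB _ hv (by simp; linarith)
      simp [this]
    · positivity
  · have h1 : (0:ℝ) < ‖hB.eigenvectorBasis.repr v i₀‖ ^ 2 := pow_pos (norm_pos_iff.mpr hi₀) 2
    nlinarith

lemma quadF_neg_of_mem_negSpan {m : ℕ} {B : Matrix (Fin m) (Fin m) ℂ}
    (hB : B.IsHermitian) {v : EuclideanSpace ℂ (Fin m)}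
    (hv : v ∈ eigSpan hB (Finset.univ.filter fun i => hB.eigenvalues i < 0))
    (hv0 : v ≠ 0) : quadF B v < 0 := by
  rw [quadF_eq_sum hB]
  obtain ⟨i₀, hi₀⟩ : ∃ i, hB.eigenvectorBasis.repr v i ≠ 0 := by
    by_contra h
    push_neg at h
    apply hv0
    apply hB.eigenvectorBasis.repr.injective
    apply PiLp.ext; intro i; simpa using h i
  have hi₀mem : hB.eigenvalues i₀ < 0 := by
    by_contra h
    exact hi₀ (repr_eq_zero_of_mem_eigSpan hB _ hv (by simp; exact le_of_not_gt h))
  have key : 0 < ∑ i, -(hB.eigenvalues i * ‖hB.eigenvectorBasis.repr v i‖ ^ 2) := by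
    refine Finset.sum_pos' ?_ ⟨i₀, Finset.mem_univ _, ?_⟩
    · intro i _
      rcases lt_or_ge (hB.eigenvalues i) 0 with h | h
      · have h2 : (0:ℝ) ≤ ‖hB.eigenvectorBasis.repr v i‖ ^ 2 := by positivity
        nlinarith
      · have : hB.eigenvectorBasis.repr v i = 0 :=
          repr_eq_zero_of_mem_eigSpan hB _ hv (by simp; linarith)
        simp [this]
    · have h1 : (0:ℝ) < ‖hB.eigenvectorBasis.repr v i₀‖ ^ 2 := pow_pos (norm_pos_iff.mpr hi₀) 2
      nlinarith
  rw [Finset.sum_neg_distrib] at key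
  linarith

lemma quadF_nonpos_of_mem {m : ℕ} {B : Matrix (Fin m) (Fin m) ℂ}
    (hB : B.IsHermitian) {v : EuclideanSpace ℂ (Fin m)}
    (hv : v ∈ eigSpan hB (Finset.univ.filter fun i => 0 < hB.eigenvalues i)ᶜ) :
    quadF B v ≤ 0 := by
  rw [quadF_eq_sum hB]
  apply Finset.sum_nonpos
  intro i _
  rcases le_or_gt (hB.eigenvalues i) 0 with h | h
  · have h2 : (0:ℝ) ≤ ‖hB.eigenvectorBasis.repr v i‖ ^ 2 := by positivity
    nlinarith
  · have : hB.eigenvectorBasis.repr v i = 0 :=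
      repr_eq_zero_of_mem_eigSpan hB _ hv (by simp [h])
    simp [this]

lemma quadF_nonneg_of_mem {m : ℕ} {B : Matrix (Fin m) (Fin m) ℂ}
    (hB : B.IsHermitian) {v : EuclideanSpace ℂ (Fin m)}
    (hv : v ∈ eigSpan hB (Finset.univ.filter fun i => hB.eigenvalues i < 0)ᶜ) :
    0 ≤ quadF B v := by
  rw [quadF_eq_sum hB]
  apply Finset.sum_nonneg
  intro i _
  rcases lt_or_ge (hB.eigenvalues i) 0 with h | h
  · have : hB.eigenvectorBasis.repr v i = 0 :=
      repr_eq_zero_of_mem_eigSpan hB _ hv (by simp [h])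
    simp [this]
  · positivity

lemma finrank_le_of_disjoint_quad {m : ℕ} {B : Matrix (Fin m) (Fin m) ℂ}
    (hB : B.IsHermitian) (W W₂ : Submodule ℂ (EuclideanSpace ℂ (Fin m)))
    (hdisj : ∀ v, v ∈ W → v ∈ W₂ → v = 0) :
    Module.finrank ℂ W + Module.finrank ℂ W₂ ≤ m := by
  have hinf : W ⊓ W₂ = ⊥ := by
    rw [Submodule.eq_bot_iff]
    exact fun v hv => hdisj v hv.1 hv.2
  have := Submodule.finrank_sup_add_finrank_inf_eq W W₂
  rw [hinf] at this
  simp only [finrank_bot, add_zero] at this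
  rw [← this]
  have := Submodule.finrank_le (W ⊔ W₂)
  simpa [finrank_euclideanSpace] using this

lemma finrank_le_posIn {m : ℕ} {B : Matrix (Fin m) (Fin m) ℂ} (hB : B.IsHermitian)
    (W : Submodule ℂ (EuclideanSpace ℂ (Fin m)))
    (hW : ∀ v ∈ W, v ≠ 0 → 0 < quadF B v) :
    Module.finrank ℂ W ≤ posIn hB := by
  set s := Finset.univ.filter fun i => 0 < hB.eigenvalues i with hs
  have key := finrank_le_of_disjoint_quad hB W (eigSpan hB sᶜ) ?_
  · have h1 : Module.finrank ℂ (eigSpan hB sᶜ) = sᶜ.card := finrank_eigSpan hB _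
    have h2 : sᶜ.card = m - s.card := by
      rw [Finset.card_compl]; simp
    have h3 : s.card ≤ m := by
      have := Finset.card_le_card (Finset.subset_univ s); simpa using this
    rw [h1, h2] at key
    rw [posIn, ← hs]
    omega
  · intro v hv1 hv2
    by_contra h0
    exact absurd (quadF_nonpos_of_mem hB hv2) (not_le.mpr (hW v hv1 h0))

lemma finrank_le_negIn {m : ℕ} {B : Matrix (Fin m) (Fin m) ℂ} (hB : B.IsHermitian)
    (W : Submodule ℂ (EuclideanSpace ℂ (Fin m)))
    (hW : ∀ v ∈ W, v ≠ 0 → quadF B v < 0) :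
    Module.finrank ℂ W ≤ negIn hB := by
  set s := Finset.univ.filter fun i => hB.eigenvalues i < 0 with hs
  have key := finrank_le_of_disjoint_quad hB W (eigSpan hB sᶜ) ?_
  · have h1 : Module.finrank ℂ (eigSpan hB sᶜ) = sᶜ.card := finrank_eigSpan hB _
    have h2 : sᶜ.card = m - s.card := by
      rw [Finset.card_compl]; simp
    have h3 : s.card ≤ m := by
      have := Finset.card_le_card (Finset.subset_univ s); simpa using this
    rw [h1, h2] at key
    rw [negIn, ← hs]
    omega
  · intro v hv1 hv2
    by_contra h0
    exact absurd (quadF_nonneg_of_mem hB hv2) (not_le.mpr (hW v hv1 h0))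

lemma quad_rel {n : ℕ} (A : Matrix (Fin n) (Fin n) ℂ) (x : Fin n → ℂ) (c : ℝ)
    (v : EuclideanSpace ℂ (Fin n)) :
    quadF (A + c • Matrix.vecMulVec x (star x)) v =
      quadF A v + c * ‖star x ⬝ᵥ (⇑v : Fin n → ℂ)‖ ^ 2 := by
  unfold quadF
  have hN : Matrix.vecMulVec x (star x) *ᵥ (⇑v : Fin n → ℂ) =
      (star x ⬝ᵥ (⇑v : Fin n → ℂ)) • x := by
    funext i
    simp only [Matrix.mulVec, Matrix.vecMulVec_apply, dotProduct, Pi.smul_apply, smul_eq_mul]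
    rw [Finset.sum_mul]
    exact Finset.sum_congr rfl fun j _ => by ring
  have hsv : star (⇑v : Fin n → ℂ) ⬝ᵥ x = star (star x ⬝ᵥ (⇑v : Fin n → ℂ)) := by
    exact star_dotProduct _ _
  rw [Matrix.add_mulVec, dotProduct_add, Matrix.smul_mulVec, hN]
  rw [dotProduct_smul, dotProduct_smul, hsv]
  set d := star x ⬝ᵥ (⇑v : Fin n → ℂ) with hd
  have hdd : d • star d = ((‖d‖ ^ 2 : ℝ) : ℂ) := by
    rw [smul_eq_mul, Complex.star_def, Complex.mul_conj, Complex.normSq_eq_norm_sq]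
    try push_cast
    try ring
  rw [hdd]
  have : c • ((‖d‖ ^ 2 : ℝ) : ℂ) = ((c * ‖d‖ ^ 2 : ℝ) : ℂ) := by
    rw [Complex.real_smul]
    try push_cast
    try ring
  rw [this, Complex.add_re, Complex.ofReal_re]

theorem stmt2 {n : ℕ} (A : Matrix (Fin n) (Fin n) ℂ) (hA : A.IsHermitian)
    (x : Fin n → ℂ) (c : ℝ) (hc : c ≠ 0)
    (M : Matrix (Fin n) (Fin n) ℂ)
    (hMdef : M = A + c • Matrix.vecMulVec x (star x)) (hM : M.IsHermitian) :
    (0 < c → posIn hM ≤ posIn hA + 1 ∧ negIn hM ≤ negIn hA) ∧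
      (c < 0 → negIn hM ≤ negIn hA + 1 ∧ posIn hM ≤ posIn hA) := by
  -- the linear functional v ↦ x* v
  let f : EuclideanSpace ℂ (Fin n) →ₗ[ℂ] ℂ :=
    { toFun := fun v => star x ⬝ᵥ (⇑v : Fin n → ℂ)
      map_add' := by intro a b; exact dotProduct_add _ _ _
      map_smul' := by
        intro a b
        show star x ⬝ᵥ (a • (⇑b : Fin n → ℂ)) = a * (star x ⬝ᵥ (⇑b : Fin n → ℂ))
        rw [dotProduct_smul]
        rfl }
  have hfapp : ∀ v : EuclideanSpace ℂ (Fin n), f v = star x ⬝ᵥ (⇑v : Fin n → ℂ) := fun _ => rfl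
  have hrel : ∀ v : EuclideanSpace ℂ (Fin n),
      quadF M v = quadF A v + c * ‖f v‖ ^ 2 := by
    intro v; rw [hMdef, hfapp]; exact quad_rel A x c v
  have hker : n ≤ Module.finrank ℂ (LinearMap.ker f) + 1 := by
    have h1 := LinearMap.finrank_range_add_finrank_ker f
    have h2 : Module.finrank ℂ (LinearMap.range f) ≤ 1 := by
      simpa using Submodule.finrank_le (LinearMap.range f)
    rw [finrank_euclideanSpace, Fintype.card_fin] at h1
    omega
  have hcut : ∀ W : Submodule ℂ (EuclideanSpace ℂ (Fin n)),
      Module.finrank ℂ W ≤ Module.finrank ℂ (W ⊓ LinearMap.ker f : _) + 1 := by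
    intro W
    have h1 := Submodule.finrank_sup_add_finrank_inf_eq W (LinearMap.ker f)
    have h2 : Module.finrank ℂ (W ⊔ LinearMap.ker f : _) ≤ n := by
      have := Submodule.finrank_le (W ⊔ LinearMap.ker f)
      simpa [finrank_euclideanSpace] using this
    omega
  constructor
  · intro hcpos
    constructor
    · -- posIn hM ≤ posIn hA + 1
      set W := eigSpan hM (Finset.univ.filter fun i => 0 < hM.eigenvalues i) with hW
      have hWrank : Module.finrank ℂ W = posIn hM := finrank_eigSpan hM _
      have hbound : Module.finrank ℂ (W ⊓ LinearMap.ker f : _) ≤ posIn hA := by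
        apply finrank_le_posIn hA
        intro v hv hv0
        have hpos := quadF_pos_of_mem_posSpan hM hv.1 hv0
        have hq := hrel v
        have hf0 : f v = 0 := hv.2
        rw [hf0] at hq; simp at hq; linarith
      have := hcut W
      omega
    · -- negIn hM ≤ negIn hA
      have hWrank : Module.finrank ℂ
          (eigSpan hM (Finset.univ.filter fun i => hM.eigenvalues i < 0)) = negIn hM :=
        finrank_eigSpan hM _
      rw [← hWrank]
      apply finrank_le_negIn hA
      intro v hv hv0
      have hneg := quadF_neg_of_mem_negSpan hM hv hv0
      have hq := hrel v
      nlinarith [norm_nonneg (f v), sq_nonneg ‖f v‖]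
  · intro hcneg
    constructor
    · -- negIn hM ≤ negIn hA + 1
      set W := eigSpan hM (Finset.univ.filter fun i => hM.eigenvalues i < 0) with hW
      have hWrank : Module.finrank ℂ W = negIn hM := finrank_eigSpan hM _
      have hbound : Module.finrank ℂ (W ⊓ LinearMap.ker f : _) ≤ negIn hA := by
        apply finrank_le_negIn hA
        intro v hv hv0
        have hneg := quadF_neg_of_mem_negSpan hM hv.1 hv0
        have hq := hrel v
        have hf0 : f v = 0 := hv.2
        rw [hf0] at hq; simp at hq; linarith
      have := hcut W
      omega
    · -- posIn hM ≤ posIn hA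
      have hWrank : Module.finrank ℂ
          (eigSpan hM (Finset.univ.filter fun i => 0 < hM.eigenvalues i)) = posIn hM :=
        finrank_eigSpan hM _
      rw [← hWrank]
      apply finrank_le_posIn hA
      intro v hv hv0
      have hpos := quadF_pos_of_mem_posSpan hM hv hv0
      have hq := hrel v
      nlinarith [sq_nonneg ‖f v‖]
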